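/- Uniform lower bound for quadratic forms over a compact family of linear constraints: Let K be a nonempty compact topological space, let σ : K → Hom_ℂ(ℂ^J, ℂ^I) be continuous (equivalently, a continuous family of I×J complex matrices), and let q : K → (sesquilinear forms on ℂ^J, linear in the first argument and conjugate-linear in the second) be continuous. Assume that for every k ∈ K and every v ∈ ℂ^J with σ(k)v = 0 one has Re q(k)(v,v) ≥ 0. Then for every δ > 0 there exists a constant C > 0 such that for all k ∈ K and all v ∈ ℂ^J: Re q(k)(v,v) ≥ −δ |v|² − C |σ(k)v|², where |·| denotes the Euclidean (Hermitian) norm on ℂ^J and ℂ^I. -/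

import Mathlib

noncomputable section

variable {I J : ℕ}

lemma continuous_semilinear_apply' {E : Type*} [NormedAddCommGroup E] [NormedSpace ℂ E] :
    Continuous fun p : (E →SL[starRingEnd ℂ] ℂ) × E => p.1 p.2 := by
  rw [continuous_iff_continuousAt]
  intro p₀
  have h2 : Filter.Tendsto (fun p : (E →SL[starRingEnd ℂ] ℂ) × E => (p.1 - p₀.1) p.2)
      (nhds p₀) (nhds 0) := by
    have hb : ∀ p : (E →SL[starRingEnd ℂ] ℂ) × E,
        ‖(p.1 - p₀.1) p.2‖ ≤ ‖p.1 - p₀.1‖ * ‖p.2‖ := fun p => (p.1 - p₀.1).le_opNorm p.2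
    have ht : Filter.Tendsto (fun p : (E →SL[starRingEnd ℂ] ℂ) × E => ‖p.1 - p₀.1‖ * ‖p.2‖)
        (nhds p₀) (nhds (‖p₀.1 - p₀.1‖ * ‖p₀.2‖)) :=
      (((continuous_fst.sub continuous_const).norm.mul continuous_snd.norm)).tendsto p₀
    refine squeeze_zero_norm hb ?_
    simpa using ht
  have h1 : Filter.Tendsto (fun p : (E →SL[starRingEnd ℂ] ℂ) × E => p₀.1 p.2)
      (nhds p₀) (nhds (p₀.1 p₀.2)) :=
    (p₀.1.continuous.comp continuous_snd).tendsto p₀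
  have h3 := h2.add h1
  simp only [ContinuousLinearMap.sub_apply, sub_add_cancel, zero_add] at h3
  exact h3

/-- **Uniform lower bound for quadratic forms over a compact family of linear
constraints.** Let `K` be a nonempty compact topological space, `σ : K → Hom(ℂᴶ, ℂᴵ)`
continuous, and `q : K → (sesquilinear forms on ℂᴶ)` continuous (forms linear in the
first argument, conjugate-linear in the second). If `Re q(k)(v,v) ≥ 0` whenever
`σ(k)v = 0`, then for every `δ > 0` there is `C > 0` with
`Re q(k)(v,v) ≥ -δ|v|² - C|σ(k)v|²` for all `k` and `v`. -/
theorem uniform_quadratic_lower_bound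
    (K : Type*) [TopologicalSpace K] [CompactSpace K] [Nonempty K]
    (σ : K → (EuclideanSpace ℂ (Fin J) →L[ℂ] EuclideanSpace ℂ (Fin I)))
    (hσ : Continuous σ)
    (q : K → (EuclideanSpace ℂ (Fin J) →L[ℂ]
      (EuclideanSpace ℂ (Fin J) →SL[starRingEnd ℂ] ℂ)))
    (hq : Continuous q)
    (hpos : ∀ k : K, ∀ v : EuclideanSpace ℂ (Fin J), σ k v = 0 → 0 ≤ (q k v v).re) :
    ∀ δ : ℝ, 0 < δ → ∃ C : ℝ, 0 < C ∧ ∀ k : K, ∀ v : EuclideanSpace ℂ (Fin J),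
      -δ * ‖v‖ ^ 2 - C * ‖σ k v‖ ^ 2 ≤ (q k v v).re := by
  intro δ hδ
  set E := EuclideanSpace ℂ (Fin J)
  -- F and G
  set F : K × E → ℝ := fun p => (q p.1 p.2 p.2).re + δ with hFdef
  set G : K × E → ℝ := fun p => ‖σ p.1 p.2‖ ^ 2 with hGdef
  have hqinner : Continuous fun p : K × E => q p.1 p.2 :=
    (hq.comp continuous_fst).clm_apply continuous_snd
  have hFcont : Continuous F := by
    have : Continuous fun p : K × E => (q p.1 p.2) p.2 :=
      continuous_semilinear_apply'.comp (hqinner.prodMk continuous_snd)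
    exact (Complex.continuous_re.comp this).add continuous_const
  have hGcont : Continuous G :=
    (((hσ.comp continuous_fst).clm_apply continuous_snd).norm).pow 2
  have hGnn : ∀ p : K × E, 0 ≤ G p := fun p => by positivity
  set S : Set (K × E) := Set.univ ×ˢ Metric.sphere (0 : E) 1 with hSdef
  have hScpt : IsCompact S := isCompact_univ.prod (isCompact_sphere 0 1)
  have hSclosed : IsClosed S := isClosed_univ.prod Metric.isClosed_sphere
  have key : ∃ n : ℕ, ∀ p ∈ S, 0 ≤ F p + n * G p := by
    by_contra h
    push_neg at h
    set Z : ℕ → Set (K × E) := fun n => S ∩ {p | F p + n * G p ≤ 0} with hZdef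
    have hZclosed : ∀ n, IsClosed (Z n) := fun n =>
      hSclosed.inter (isClosed_le (hFcont.add (continuous_const.mul hGcont)) continuous_const)
    have hZmono : ∀ n, Z (n + 1) ⊆ Z n := by
      intro n p hp
      refine ⟨hp.1, ?_⟩
      have h2 := hp.2
      simp only [Set.mem_setOf_eq] at h2 ⊢
      have : (n : ℝ) * G p ≤ ((n : ℕ) + 1 : ℕ) * G p := by
        push_cast
        nlinarith [hGnn p]
      linarith
    have hZne : ∀ n, (Z n).Nonempty := by
      intro n
      obtain ⟨p, hpS, hp⟩ := h n
      exact ⟨p, hpS, le_of_lt hp⟩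
    have hZ0cpt : IsCompact (Z 0) :=
      hScpt.inter_right (isClosed_le (hFcont.add (continuous_const.mul hGcont)) continuous_const)
    obtain ⟨p, hp⟩ := IsCompact.nonempty_iInter_of_sequence_nonempty_isCompact_isClosed
      Z hZmono hZne hZ0cpt hZclosed
    simp only [Set.mem_iInter] at hp
    have hpS : p ∈ S := (hp 0).1
    have hall : ∀ n : ℕ, F p + n * G p ≤ 0 := fun n => (hp n).2
    have hG0 : G p = 0 := by
      by_contra hG
      have hGpos : 0 < G p := lt_of_le_of_ne (hGnn p) (Ne.symm hG)
      obtain ⟨n, hn⟩ := exists_nat_gt ((-F p) / G p)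
      have := hall n
      have : (-F p) / G p * G p < n * G p := by
        exact mul_lt_mul_of_pos_right hn hGpos
      rw [div_mul_cancel₀ _ (ne_of_gt hGpos)] at this
      linarith [hall n]
    have hσ0 : σ p.1 p.2 = 0 := by
      have : ‖σ p.1 p.2‖ = 0 := by
        have := hG0
        simp only [hGdef] at this
        nlinarith [norm_nonneg (σ p.1 p.2)]
      exact norm_eq_zero.mp this
    have := hpos p.1 p.2 hσ0
    have h0 := hall 0
    simp only [Nat.cast_zero, zero_mul, add_zero, hFdef] at h0
    linarith
  obtain ⟨n, hn⟩ := key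
  refine ⟨(n : ℝ) + 1, by positivity, ?_⟩
  intro k v
  rcases eq_or_ne v 0 with rfl | hv
  · simp
  · have hc : (0 : ℝ) < ‖v‖ := norm_pos_iff.mpr hv
    set c : ℝ := ‖v‖ with hcdef
    set u : E := ((c : ℂ)⁻¹) • v with hudef
    have hu : ‖u‖ = 1 := by
      rw [hudef, norm_smul]
      simp only [norm_inv, Complex.norm_real, Real.norm_eq_abs, abs_of_pos hc]
      field_simp
      exact hcdef.symm
    have hpS : (k, u) ∈ S := by
      constructor
      · trivial
      · simpa using hu
    have hkey := hn (k, u) hpS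
    have hvcu : v = (c : ℂ) • u := by
      rw [hudef, smul_smul]
      rw [mul_inv_cancel₀ (by exact_mod_cast ne_of_gt hc)]
      simp
    have hqscale : (q k v v).re = c ^ 2 * (q k u u).re := by
      have h1 : q k v v = ((c * c : ℝ) : ℂ) * q k u u := by
        have e1 : q k v = (c : ℂ) • q k u := by rw [hvcu]; exact map_smul (q k) _ _
        have e2 : (q k u) v = (starRingEnd ℂ) (c : ℂ) • (q k u) u := by
          rw [hvcu]; exact (q k u).map_smulₛₗ _ _
        rw [e1, ContinuousLinearMap.smul_apply, e2, Complex.conj_ofReal]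
        push_cast
        simp [smul_eq_mul]
        ring
      rw [h1, Complex.re_ofReal_mul]
      ring
    have hσscale : ‖σ k v‖ ^ 2 = c ^ 2 * ‖σ k u‖ ^ 2 := by
      conv_lhs => rw [hvcu]
      rw [map_smul, norm_smul]
      simp only [Complex.norm_real, Real.norm_eq_abs, abs_of_pos hc]
      ring
    have hnorm : ‖v‖ ^ 2 = c ^ 2 := by rw [hcdef]
    rw [hqscale, hσscale, hnorm]
    simp only [hFdef, hGdef] at hkey
    nlinarith [sq_nonneg c, norm_nonneg (σ k u), sq_nonneg (‖σ k u‖), hc]
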